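/- Let numbers B_1, B_2, … ∈ [0,∞), α ∈ (0,∞) and r ∈ [0,1] satisfy B_{m+n} ≤ ((m+n)^α/((m+n)^α − r)) · (m B_m + n B_n)/(m+n) + r/(m+n)^α for all m, n with m ≤ n ≤ 2m. Then sup_n B_n ≤ (1 + C_α r) B_1 + C_α r for some constant C_α depending on α only. -/

import Mathlib

theorem recursive_upper_bound (α : ℝ) (hα : 0 < α) :
    ∃ C : ℝ, ∀ (B : ℕ → ℝ) (r : ℝ),
      (∀ n, 1 ≤ n → 0 ≤ B n) → 0 ≤ r → r ≤ 1 →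
      (∀ m n : ℕ, 1 ≤ m → m ≤ n → n ≤ 2 * m →
        B (m + n) ≤ (((m : ℝ) + n) ^ α / (((m : ℝ) + n) ^ α - r)) *
            (((m : ℝ) * B m + (n : ℝ) * B n) / ((m : ℝ) + n))
          + r / ((m : ℝ) + n) ^ α) →
      ∀ n, 1 ≤ n → B n ≤ (1 + C * r) * B 1 + C * r := by
  have h2 : (1:ℝ) < (2:ℝ) ^ α :=
    (Real.one_lt_rpow_iff_of_pos (by norm_num)).mpr (Or.inl ⟨by norm_num, hα⟩)
  have h32 : (1:ℝ) < ((3:ℝ)/2) ^ α :=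
    (Real.one_lt_rpow_iff_of_pos (by norm_num)).mpr (Or.inl ⟨by norm_num, hα⟩)
  set c : ℝ := (2:ℝ)^α / ((2:ℝ)^α - 1) with hc_def
  have hc1 : 1 < c := (one_lt_div (by linarith)).mpr (by linarith)
  have hc0 : 0 < c := lt_trans one_pos hc1
  have hc_eq : (c - 1) * (2:ℝ)^α = c := by
    have hne : (2:ℝ)^α - 1 ≠ 0 := by intro h; rw [sub_eq_zero] at h; linarith
    rw [hc_def]; field_simp; ring
  set K : ℝ := 1 / (((3:ℝ)/2)^α - 1) with hK_def
  have hK0 : 0 < K := div_pos one_pos (by linarith)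
  have hK_eq : K * (((3:ℝ)/2)^α - 1) = 1 := by
    rw [hK_def]; exact one_div_mul_cancel (by intro h; rw [sub_eq_zero] at h; linarith)
  refine ⟨c * K * Real.exp (c * K), ?_⟩
  intro B r hB hr0 hr1 hrec
  set D : ℝ := c * K * Real.exp (c * K) with hD_def
  set b : ℝ := B 1 + 1 with hb_def
  have hb1 : 1 ≤ b := by have := hB 1 le_rfl; simp only [hb_def]; linarith
  set T : ℕ → ℝ := fun n => c * r * K * (1 - (((n:ℝ))^α)⁻¹) with hT_def
  have hpow1 : ∀ n : ℕ, 1 ≤ n → (1:ℝ) ≤ ((n:ℝ))^α := by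
    intro n hn
    calc (1:ℝ) = 1 ^ α := (Real.one_rpow α).symm
    _ ≤ ((n:ℝ))^α := Real.rpow_le_rpow zero_le_one (by exact_mod_cast hn) hα.le
  have hpow0 : ∀ n : ℕ, 1 ≤ n → (0:ℝ) < ((n:ℝ))^α := by
    intro n hn; exact lt_of_lt_of_le one_pos (hpow1 n hn)
  have hcrK0 : (0:ℝ) ≤ c * r * K := by positivity
  have hT0 : ∀ n : ℕ, 1 ≤ n → 0 ≤ T n := by
    intro n hn
    have h1 : (((n:ℝ))^α)⁻¹ ≤ 1 := inv_le_one_of_one_le₀ (hpow1 n hn)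
    simp only [hT_def]
    exact mul_nonneg hcrK0 (by linarith)
  have hTmono : ∀ m n : ℕ, 1 ≤ m → m ≤ n → T m ≤ T n := by
    intro m n hm hmn
    have hmn' : ((m:ℝ))^α ≤ ((n:ℝ))^α :=
      Real.rpow_le_rpow (Nat.cast_nonneg m) (by exact_mod_cast hmn) hα.le
    have hinv : (((n:ℝ))^α)⁻¹ ≤ (((m:ℝ))^α)⁻¹ :=
      inv_anti₀ (hpow0 m hm) hmn'
    simp only [hT_def]
    exact mul_le_mul_of_nonneg_left (by linarith) hcrK0
  set Φ : ℕ → ℝ := fun n => b * Real.exp (T n) - 1 with hΦ_def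
  have hΦ0 : ∀ n : ℕ, 1 ≤ n → 0 ≤ Φ n := by
    intro n hn
    have h1 : (1:ℝ) ≤ Real.exp (T n) := Real.one_le_exp (hT0 n hn)
    simp only [hΦ_def]
    nlinarith [h1, hb1]
  have hΦmono : ∀ m n : ℕ, 1 ≤ m → m ≤ n → Φ m ≤ Φ n := by
    intro m n hm hmn
    have h1 : Real.exp (T m) ≤ Real.exp (T n) := Real.exp_le_exp.mpr (hTmono m n hm hmn)
    simp only [hΦ_def]
    have := mul_le_mul_of_nonneg_left h1 (by linarith : (0:ℝ) ≤ b)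
    linarith
  have key : ∀ n : ℕ, 1 ≤ n → B n ≤ Φ n := by
    intro n
    induction n using Nat.strong_induction_on with
    | _ n ih =>
      intro hn
      rcases Nat.lt_or_ge n 2 with hsm | h2n
      · interval_cases n
        have hT1 : T 1 = 0 := by simp [hT_def]
        simp only [hΦ_def, hT1, Real.exp_zero, mul_one, hb_def]
        linarith
      · have hm1 : 1 ≤ n / 2 := by omega
        have hk1 : 1 ≤ n - n / 2 := by omega
        have hmk : n / 2 ≤ n - n / 2 := by omega
        have hk2m : n - n / 2 ≤ 2 * (n / 2) := by omega
        have hmkn : n / 2 + (n - n / 2) = n := by omega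
        have hmlt : n / 2 < n := by omega
        have hklt : n - n / 2 < n := by omega
        have h3k : 3 * (n - n / 2) ≤ 2 * n := by omega
        set m := n / 2
        set k := n - n / 2
        have hcast : (m:ℝ) + (k:ℝ) = (n:ℝ) := by rw [← Nat.cast_add, hmkn]
        have hrec' := hrec m k hm1 hmk hk2m
        rw [hmkn] at hrec'
        rw [hcast] at hrec'
        set N : ℝ := ((n:ℝ))^α with hN_def
        have hN2 : (2:ℝ)^α ≤ N := by
          rw [hN_def]
          exact Real.rpow_le_rpow (by norm_num) (by exact_mod_cast h2n) hα.le
        have hN1 : (1:ℝ) < N := lt_of_lt_of_le h2 hN2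
        have hN0 : (0:ℝ) < N := lt_trans one_pos hN1
        have hNr : (0:ℝ) < N - r := by linarith
        have hn0 : (0:ℝ) < (n:ℝ) := by
          have : (1:ℝ) ≤ (n:ℝ) := by exact_mod_cast hn
          linarith
        have hIHm : B m ≤ Φ m := ih m hmlt hm1
        have hIHk : B k ≤ Φ k := ih k hklt hk1
        have hΦmk : Φ m ≤ Φ k := hΦmono m k hm1 hmk
        have hΦk0 : 0 ≤ Φ k := hΦ0 k hk1
        have hBm0 : 0 ≤ B m := hB m hm1
        have hBk0 : 0 ≤ B k := hB k hk1
        set x : ℝ := c * r / N with hx_def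
        have hx0 : 0 ≤ x := by positivity
        have hxN : x * N = c * r := by
          rw [hx_def]; exact div_mul_cancel₀ _ (ne_of_gt hN0)
        have hxc : x ≤ c - 1 := by
          rw [hx_def, div_le_iff₀ hN0]
          have h1 : c * r ≤ c :=
            by linarith only [mul_nonneg hc0.le (by linarith : (0:ℝ) ≤ 1 - r)]
          have h2' : c ≤ (c - 1) * N := by
            linarith only [hc_eq,
              mul_nonneg (by linarith : (0:ℝ) ≤ c - 1) (by linarith : (0:ℝ) ≤ N - (2:ℝ)^α)]
          linarith
        have havg : ((m:ℝ) * B m + (k:ℝ) * B k) / ((n:ℝ)) ≤ Φ k := by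
          rw [div_le_iff₀ hn0, ← hcast]
          have ha : (m:ℝ) * B m ≤ (m:ℝ) * Φ k :=
            mul_le_mul_of_nonneg_left (le_trans hIHm hΦmk) (Nat.cast_nonneg m)
          have hb' : (k:ℝ) * B k ≤ (k:ℝ) * Φ k :=
            mul_le_mul_of_nonneg_left hIHk (Nat.cast_nonneg k)
          linarith only [ha, hb']
        have havg0 : 0 ≤ ((m:ℝ) * B m + (k:ℝ) * B k) / ((n:ℝ)) := by positivity
        have hF : N / (N - r) ≤ 1 + x := by
          rw [div_le_iff₀ hNr]
          linarith only [hxN, mul_le_mul_of_nonneg_right hxc hr0]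
        have step1 : B n ≤ (1 + x) * Φ k + r / N := by
          have hmul : N / (N - r) * (((m:ℝ) * B m + (k:ℝ) * B k) / ((n:ℝ)))
              ≤ (1 + x) * Φ k :=
            mul_le_mul hF havg havg0 (by linarith)
          calc B n ≤ N / (N - r) * (((m:ℝ) * B m + (k:ℝ) * B k) / ((n:ℝ))) + r / N :=
                hrec'
            _ ≤ (1 + x) * Φ k + r / N := by linarith
        have hkα0 : (0:ℝ) < ((k:ℝ))^α := hpow0 k hk1
        have hk23 : ((k:ℝ))^α ≤ ((2:ℝ)/3)^α * N := by
          rw [hN_def, ← Real.mul_rpow (by norm_num) (Nat.cast_nonneg n)]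
          refine Real.rpow_le_rpow (Nat.cast_nonneg k) ?_ hα.le
          have : (3:ℝ) * k ≤ 2 * n := by exact_mod_cast h3k
          linarith
        have hinvk : ((3:ℝ)/2)^α * N⁻¹ ≤ (((k:ℝ))^α)⁻¹ := by
          have h1 : (((2:ℝ)/3)^α * N)⁻¹ ≤ (((k:ℝ))^α)⁻¹ :=
            inv_anti₀ hkα0 hk23
          have h23 : (((2:ℝ)/3)^α)⁻¹ = ((3:ℝ)/2)^α := by
            rw [← Real.inv_rpow (by norm_num)]; norm_num
          rw [mul_inv, h23] at h1
          exact h1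
        have hKN : K * (((3:ℝ)/2)^α) * N⁻¹ - K * N⁻¹ = N⁻¹ := by
          linear_combination N⁻¹ * hK_eq
        have hinner : N⁻¹ + K * (1 - (((k:ℝ))^α)⁻¹) ≤ K * (1 - N⁻¹) := by
          have h1 := mul_le_mul_of_nonneg_left hinvk hK0.le
          linarith only [h1, hKN]
        have hTk : x + T k ≤ T n := by
          simp only [hT_def, ← hN_def]
          calc x + c * r * K * (1 - (((k:ℝ))^α)⁻¹)
              = c * r * (N⁻¹ + K * (1 - (((k:ℝ))^α)⁻¹)) := by
                rw [hx_def]; field_simp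
            _ ≤ c * r * (K * (1 - N⁻¹)) :=
                mul_le_mul_of_nonneg_left hinner (by positivity)
            _ = c * r * K * (1 - N⁻¹) := by ring
        have hxe : 1 + x ≤ Real.exp x := by linarith [Real.add_one_le_exp x]
        have hexp : (1 + x) * Real.exp (T k) ≤ Real.exp (T n) := by
          calc (1 + x) * Real.exp (T k) ≤ Real.exp x * Real.exp (T k) :=
                mul_le_mul_of_nonneg_right hxe (Real.exp_pos _).le
            _ = Real.exp (x + T k) := (Real.exp_add _ _).symm
            _ ≤ Real.exp (T n) := Real.exp_le_exp.mpr hTk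
        have hrN : r / N ≤ x := by
          rw [hx_def]
          apply (div_le_div_iff_of_pos_right hN0).mpr
          linarith only [mul_nonneg (by linarith : (0:ℝ) ≤ c - 1) hr0, hxN]
        have step2 : (1 + x) * Φ k + r / N ≤ Φ n := by
          have h1 : b * ((1 + x) * Real.exp (T k)) ≤ b * Real.exp (T n) :=
            mul_le_mul_of_nonneg_left hexp (by linarith)
          have h2r : -(1 + x) + r / N ≤ -1 := by linarith only [hrN]
          calc (1 + x) * Φ k + r / N
              = b * ((1 + x) * Real.exp (T k)) + (-(1 + x) + r / N) := by
                simp only [hΦ_def]; ring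
            _ ≤ b * Real.exp (T n) + (-1) := add_le_add h1 h2r
            _ = Φ n := by simp only [hΦ_def]; ring
        exact le_trans step1 step2
  intro n hn
  have h1 := key n hn
  have hTn : T n ≤ c * r * K := by
    have hinv : (0:ℝ) ≤ (((n:ℝ))^α)⁻¹ := by positivity
    simp only [hT_def]
    linarith only [mul_nonneg hcrK0 hinv]
  have haux : Real.exp (c*r*K) ≤ 1 + (c*r*K) * Real.exp (c*r*K) := by
    have h := Real.add_one_le_exp (-(c*r*K))
    rw [Real.exp_neg] at h
    have hp := Real.exp_pos (c*r*K)
    have h2' := mul_le_mul_of_nonneg_right h hp.le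
    rw [inv_mul_cancel₀ (ne_of_gt hp)] at h2'
    linarith only [h2']
  have hcK : c * r * K ≤ c * K := by
    linarith [mul_nonneg (mul_nonneg hc0.le hK0.le) (by linarith : (0:ℝ) ≤ 1 - r)]
  have hexp_le : Real.exp (T n) ≤ 1 + D * r := by
    calc Real.exp (T n) ≤ Real.exp (c*r*K) := Real.exp_le_exp.mpr hTn
      _ ≤ 1 + (c*r*K) * Real.exp (c*r*K) := haux
      _ ≤ 1 + (c*r*K) * Real.exp (c*K) := by
          linarith only [mul_le_mul_of_nonneg_left (Real.exp_le_exp.mpr hcK) hcrK0]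
      _ = 1 + D * r := by rw [hD_def]; ring
  have hfin : b * Real.exp (T n) ≤ b * (1 + D * r) :=
    mul_le_mul_of_nonneg_left hexp_le (by linarith)
  have hΦn : Φ n = b * Real.exp (T n) - 1 := rfl
  have hbeq : b * (1 + D * r) - 1 = (1 + D * r) * B 1 + D * r := by
    rw [hb_def]; ring
  rw [hΦn] at h1
  linarith only [h1, hfin, hbeq]
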